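/- Suppose S is symmetrically G-graded, N is a normal subgroup of G, and I, J are ideals of S_N := ⊕_{n∈N} S_n. If I or J is ε-invariant (meaning S_x S_{x^{-1}} K = K S_x S_{x^{-1}} for all x ∈ G, where K is the ε-invariant one), then (IJ)^x = I^x J^x for every x ∈ G. -/

import Mathlib

open Pointwise

/-- The product `UV` of two subsets of a ring: the additive subgroup consisting of all
finite sums of products `u * v` with `u ∈ U`, `v ∈ V`. -/
def setProd {S : Type*} [NonUnitalRing S] (U V : Set S) : AddSubgroup S :=
  AddSubgroup.closure (U * V)

/-- For a `G`-graded ring with components `𝒮` and a subset `I ⊆ S`, the subset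
`I^x := S_{x⁻¹} I S_x` (finite sums of triple products). -/
def gradedConj {G : Type*} [Group G] {S : Type*} [NonUnitalRing S]
    (𝒮 : G → AddSubgroup S) (I : Set S) (x : G) : AddSubgroup S :=
  setProd ((setProd (𝒮 x⁻¹ : Set S) I : AddSubgroup S) : Set S) (𝒮 x : Set S)

/-- `I` is a (two-sided) ideal of the subring `T` of `S`. -/
def IsIdealOfComponent {S : Type*} [NonUnitalRing S] (T : AddSubgroup S)
    (I : AddSubgroup S) : Prop :=
  I ≤ T ∧ ∀ a ∈ T, ∀ b ∈ I, a * b ∈ I ∧ b * a ∈ I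

/-- A subset `K` of a `G`-graded ring is `ε`-invariant if
`S_x S_{x⁻¹} K = K S_x S_{x⁻¹}` for every `x ∈ G`. -/
def IsEpsilonInvariant {G : Type*} [Group G] {S : Type*} [NonUnitalRing S]
    (𝒮 : G → AddSubgroup S) (K : Set S) : Prop :=
  ∀ x : G, setProd ((setProd (𝒮 x : Set S) (𝒮 x⁻¹ : Set S) : AddSubgroup S) : Set S) K =
    setProd K ((setProd (𝒮 x : Set S) (𝒮 x⁻¹ : Set S) : AddSubgroup S) : Set S)

lemma cl_mul_left {S : Type*} [NonUnitalRing S] (T C : Set S) :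
    AddSubgroup.closure (((AddSubgroup.closure T : AddSubgroup S) : Set S) * C)
      = AddSubgroup.closure (T * C) := by
  apply le_antisymm
  · rw [AddSubgroup.closure_le]
    rintro _ ⟨t, ht, c, hc, rfl⟩
    induction ht using AddSubgroup.closure_induction with
    | mem a ha => exact AddSubgroup.subset_closure ⟨a, ha, c, hc, rfl⟩
    | zero => simpa using (AddSubgroup.closure (T * C)).zero_mem
    | add a b _ _ iha ihb => simpa [add_mul] using add_mem iha ihb
    | neg a _ iha => simpa [neg_mul] using neg_mem iha
  · exact AddSubgroup.closure_mono
      (Set.mul_subset_mul_right AddSubgroup.subset_closure)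

lemma cl_mul_right {S : Type*} [NonUnitalRing S] (C T : Set S) :
    AddSubgroup.closure (C * ((AddSubgroup.closure T : AddSubgroup S) : Set S))
      = AddSubgroup.closure (C * T) := by
  apply le_antisymm
  · rw [AddSubgroup.closure_le]
    rintro _ ⟨c, hc, t, ht, rfl⟩
    induction ht using AddSubgroup.closure_induction with
    | mem a ha => exact AddSubgroup.subset_closure ⟨c, hc, a, ha, rfl⟩
    | zero => simpa using (AddSubgroup.closure (C * T)).zero_mem
    | add a b _ _ iha ihb => simpa [mul_add] using add_mem iha ihb
    | neg a _ iha => simpa [mul_neg] using neg_mem iha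
  · exact AddSubgroup.closure_mono
      (Set.mul_subset_mul_left AddSubgroup.subset_closure)

lemma cl_congr_left {S : Type*} [NonUnitalRing S] {A₁ A₂ : Set S} (B : Set S)
    (h : AddSubgroup.closure A₁ = AddSubgroup.closure A₂) :
    AddSubgroup.closure (A₁ * B) = AddSubgroup.closure (A₂ * B) := by
  rw [← cl_mul_left A₁ B, h, cl_mul_left]

lemma cl_congr_right {S : Type*} [NonUnitalRing S] {A₁ A₂ : Set S} (B : Set S)
    (h : AddSubgroup.closure A₁ = AddSubgroup.closure A₂) :
    AddSubgroup.closure (B * A₁) = AddSubgroup.closure (B * A₂) := by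
  rw [← cl_mul_right B A₁, h, cl_mul_right]

/-- Suppose `S` is symmetrically `G`-graded, `N` is a normal subgroup of `G`, and `I, J` are
ideals of `S_N := ⊕_{n ∈ N} S_n`. If `I` or `J` is `ε`-invariant, then `(IJ)^x = I^x J^x`
for every `x ∈ G`. -/
theorem gradedConj_mul_of_epsilonInvariant {G : Type*} [Group G] [DecidableEq G]
    {S : Type*} [NonUnitalRing S] (𝒮 : G → AddSubgroup S)
    [DirectSum.Decomposition 𝒮]
    (hmul : ∀ {x y : G} {a b : S}, a ∈ 𝒮 x → b ∈ 𝒮 y → a * b ∈ 𝒮 (x * y))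
    (hsym : ∀ x : G,
      setProd ((setProd (𝒮 x : Set S) (𝒮 x⁻¹ : Set S) : AddSubgroup S) : Set S)
        (𝒮 x : Set S) = 𝒮 x)
    (N : Subgroup G) (hN : N.Normal)
    (I J : AddSubgroup S)
    (hI : IsIdealOfComponent (⨆ n ∈ N, 𝒮 n) I)
    (hJ : IsIdealOfComponent (⨆ n ∈ N, 𝒮 n) J)
    (hinv : IsEpsilonInvariant 𝒮 (I : Set S) ∨ IsEpsilonInvariant 𝒮 (J : Set S)) :
    ∀ x : G, gradedConj 𝒮 ((setProd (I : Set S) (J : Set S) : AddSubgroup S) : Set S) x =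
      setProd ((gradedConj 𝒮 (I : Set S) x : AddSubgroup S) : Set S)
        ((gradedConj 𝒮 (J : Set S) x : AddSubgroup S) : Set S) := by
  intro x
  have hc := AddSubgroup.closure_le (G := S)
  set A : Set S := (𝒮 x⁻¹ : Set S) with hA
  set B : Set S := (𝒮 x : Set S) with hB
  -- absorbed symmetric identities
  have hsx : AddSubgroup.closure ((B * A) * B) = 𝒮 x := by
    have := hsym x; simp only [setProd] at this
    rwa [cl_mul_left] at this
  have hsxi : AddSubgroup.closure ((A * B) * A) = 𝒮 x⁻¹ := by
    have := hsym x⁻¹; simp only [setProd, inv_inv] at this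
    rwa [cl_mul_left] at this
  simp only [gradedConj, setProd]
  rw [cl_mul_right A ((I : Set S) * (J : Set S)),
    cl_mul_left (A * ((I : Set S) * (J : Set S))) B,
    cl_mul_left (A * (I : Set S)) B, cl_mul_left (A * (J : Set S)) B,
    cl_mul_left ((A * (I : Set S)) * B),
    cl_mul_right (((A * (I : Set S)) * B)) ((A * (J : Set S)) * B)]
  -- goal: closure ((A*(I*J))*B) = closure (((A*I)*B)*((A*J)*B))
  have lhs_eq : (A * ((I : Set S) * (J : Set S))) * B
      = (A * (I : Set S)) * ((J : Set S) * B) := by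
    simp only [mul_assoc]
  rw [lhs_eq]
  rcases hinv with h | h
  · -- I is ε-invariant : ε_x I = I ε_x
    have hIx : AddSubgroup.closure ((B * A) * (I : Set S))
        = AddSubgroup.closure ((I : Set S) * (B * A)) := by
      have := h x; simp only [setProd] at this
      rwa [cl_mul_left, cl_mul_right] at this
    have e1 : ((A * (I : Set S)) * B) * ((A * (J : Set S)) * B)
        = (A * ((I : Set S) * (B * A))) * ((J : Set S) * B) := by
      simp only [mul_assoc]
    rw [e1, cl_congr_left _ (cl_congr_right A hIx.symm)]
    -- now: = closure ((A * ((B*A) * I)) * (J*B))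
    have e2 : A * ((B * A) * (I : Set S)) = ((A * B) * A) * (I : Set S) := by
      simp only [mul_assoc]
    rw [e2]
    have e3 : AddSubgroup.closure (((A * B) * A) * (I : Set S))
        = AddSubgroup.closure (A * (I : Set S)) := by
      rw [← cl_mul_left ((A * B) * A) (I : Set S), hsxi]
    rw [cl_congr_left _ e3]
  · -- J is ε-invariant : ε_x J = J ε_x
    have hJx : AddSubgroup.closure ((B * A) * (J : Set S))
        = AddSubgroup.closure ((J : Set S) * (B * A)) := by
      have := h x; simp only [setProd] at this
      rwa [cl_mul_left, cl_mul_right] at this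
    have e1 : ((A * (I : Set S)) * B) * ((A * (J : Set S)) * B)
        = (A * (I : Set S)) * (((B * A) * (J : Set S)) * B) := by
      simp only [mul_assoc]
    rw [e1, cl_congr_right _ (cl_congr_left B hJx)]
    -- now: = closure ((A*I) * ((J*(B*A))*B))
    have e2 : ((J : Set S) * (B * A)) * B = (J : Set S) * ((B * A) * B) := by
      simp only [mul_assoc]
    rw [e2]
    have e3 : AddSubgroup.closure ((J : Set S) * ((B * A) * B))
        = AddSubgroup.closure ((J : Set S) * B) := by
      rw [← cl_mul_right (J : Set S) ((B * A) * B), hsx]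
    rw [cl_congr_right _ e3]
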